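/- Let G be a P_{10}-free graph with minimum degree at least 3 containing neither C_4 nor C_8, and let C = x_1...x_5 x_1 be a good 5-hole of G. Then for every index i with x_i ∉ I_C ∪ I_C^+, there exists a good (C, x_i)-path of length 3: an induced path y_i z_i u_i in G − V(C) with x_i y_i ∈ E(G) such that the only edge between {y_i, z_i, u_i} and V(C) is y_i x_i. -/

import Mathlib

open SimpleGraph

/-- `G` contains a cycle of length `n` as a subgraph. -/
def HasCycleLength {V : Type*} (G : SimpleGraph V) (n : ℕ) : Prop :=
  ∃ (v : V) (c : G.Walk v v), c.IsCycle ∧ c.length = n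

/-- A hole: a cycle without chords (induced cycle), as a walk. -/
def IsHole {V : Type*} (G : SimpleGraph V) {v : V} (c : G.Walk v v) : Prop :=
  c.IsCycle ∧ ∀ a b : V, a ∈ c.support → b ∈ c.support → G.Adj a b → s(a, b) ∈ c.edges

/-- An induced cycle (hole) of length `m`, given by an injective map `ZMod m → V`
whose adjacencies are exactly the consecutive pairs. -/
def IsCircInduced {V : Type*} (G : SimpleGraph V) (m : ℕ) (x : ZMod m → V) : Prop :=
  Function.Injective x ∧ ∀ i j : ZMod m, G.Adj (x i) (x j) ↔ (j = i + 1 ∨ i = j + 1)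

/-- The set of indices `i` such that `x i` and `x (i+1)` have a common
neighbor outside the cycle `x`. -/
def ICset {V : Type*} (G : SimpleGraph V) (m : ℕ) (x : ZMod m → V) : Set (ZMod m) :=
  {i | ∃ y, y ∉ Set.range x ∧ G.Adj (x i) y ∧ G.Adj (x (i + 1)) y}

/-- A good hole: a hole of length `m ≥ 5`, where `G` has no hole `C'` with
`5 ≤ ℓ(C') < m`, and subject to this `|I_C|` is maximum among holes of length `m`. -/
def IsGoodHole {V : Type*} (G : SimpleGraph V) (m : ℕ) (x : ZMod m → V) : Prop :=
  5 ≤ m ∧ IsCircInduced G m x ∧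
  (¬ ∃ (w : V) (d : G.Walk w w), IsHole G d ∧ 5 ≤ d.length ∧ d.length < m) ∧
  (∀ y : ZMod m → V, IsCircInduced G m y → (ICset G m y).ncard ≤ (ICset G m x).ncard)

/-- `G` has no induced path on 10 vertices. -/
def P10Free {V : Type*} (G : SimpleGraph V) : Prop :=
  ¬ ∃ p : Fin 10 → V, Function.Injective p ∧
    ∀ a b : Fin 10, G.Adj (p a) (p b) ↔ (a.val + 1 = b.val ∨ b.val + 1 = a.val)

lemma zmod5 : ∀ a : ZMod 5, a = 0 ∨ a = 1 ∨ a = 2 ∨ a = 3 ∨ a = 4 := by decide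

lemma hasC4 {V : Type*} (G : SimpleGraph V) (a b c d : V)
    (hab : G.Adj a b) (hbc : G.Adj b c) (hcd : G.Adj c d) (hda : G.Adj d a)
    (hac : a ≠ c) (hbd : b ≠ d) : HasCycleLength G 4 := by
  refine ⟨a, .cons hab (.cons hbc (.cons hcd (.cons hda .nil))), ?_, by simp⟩
  simp [Walk.isCycle_def, Walk.isTrail_def, List.nodup_cons, Sym2.eq_iff]
  refine ⟨⟨?_, ?_, ?_⟩, ?_, ?_, ?_⟩ <;> aesop

lemma hasC8 {V : Type*} (G : SimpleGraph V) (a b c d e f g h : V)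
    (hab : G.Adj a b) (hbc : G.Adj b c) (hcd : G.Adj c d) (hde : G.Adj d e)
    (hef : G.Adj e f) (hfg : G.Adj f g) (hgh : G.Adj g h) (hha : G.Adj h a)
    (hac : a ≠ c) (had : a ≠ d) (hae : a ≠ e) (haf : a ≠ f) (hag : a ≠ g)
    (hbd : b ≠ d) (hbe : b ≠ e) (hbf : b ≠ f) (hbg : b ≠ g) (hbh : b ≠ h)
    (hce : c ≠ e) (hcf : c ≠ f) (hcg : c ≠ g) (hch : c ≠ h)
    (hdf : d ≠ f) (hdg : d ≠ g) (hdh : d ≠ h)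
    (heg : e ≠ g) (heh : e ≠ h) (hfh : f ≠ h) : HasCycleLength G 8 := by
  refine ⟨a, .cons hab (.cons hbc (.cons hcd (.cons hde (.cons hef (.cons hfg
    (.cons hgh (.cons hha .nil))))))), ?_, by simp⟩
  have h1 := hab.ne; have h2 := hbc.ne; have h3 := hcd.ne; have h4 := hde.ne
  have h5 := hef.ne; have h6 := hfg.ne; have h7 := hgh.ne; have h8 := hha.ne
  simp_all [Walk.isCycle_def, Walk.isTrail_def, List.nodup_cons, Sym2.eq_iff, eq_comm, Ne]

lemma handlerA {V : Type*} (G : SimpleGraph V)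
    (hC4 : ¬ HasCycleLength G 4) (hC8 : ¬ HasCycleLength G 8)
    (x : ZMod 5 → V) (hcirc : IsCircInduced G 5 x)
    (hmax : ∀ w : ZMod 5 → V, IsCircInduced G 5 w → (ICset G 5 w).ncard ≤ (ICset G 5 x).ncard)
    (i : ZMod 5) (hIi : i ∉ ICset G 5 x) (hIm : i - 1 ∉ ICset G 5 x)
    (y z0 s : V)
    (hyr : y ∉ Set.range x) (hychar : ∀ j, G.Adj y (x j) ↔ j = i)
    (hz0r : z0 ∉ Set.range x) (hz0char : ∀ j, G.Adj z0 (x j) ↔ j = i)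
    (hsr : s ∉ Set.range x)
    (hyz0 : G.Adj y z0) (hys : G.Adj y s) (hz0s : z0 ≠ s)
    (hs2 : G.Adj s (x (i+2))) (hs0 : ¬ G.Adj s (x i)) (hs1 : ¬ G.Adj s (x (i+1)))
    (hs4 : ¬ G.Adj s (x (i+4))) : False := by
  obtain ⟨hinj, hadj⟩ := hcirc
  have h5zero : (5:ZMod 5) = 0 := by decide
  have e41 : i + 4 + 1 = i := by rw [add_assoc, show (4:ZMod 5)+1 = 0 by decide, add_zero]
  have em1 : i - 1 = i + 4 := by linear_combination -h5zero
  have hne : ∀ a b : ZMod 5, a ≠ b → x (i+a) ≠ x (i+b) :=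
    fun a b hab h => hab (add_left_cancel (hinj h))
  have hnei : ∀ b : ZMod 5, b ≠ 0 → x i ≠ x (i+b) := by
    intro b hb h
    have h2 : i + 0 = i + b := by rw [add_zero]; exact hinj h
    exact hb ((add_right_inj i).1 h2).symm
  have hrne : ∀ v : V, v ∉ Set.range x → ∀ j : ZMod 5, x j ≠ v := fun v hv j h => hv ⟨j, h⟩
  have hrne' : ∀ v : V, v ∉ Set.range x → ∀ j : ZMod 5, v ≠ x j := fun v hv j h => hv ⟨j, h.symm⟩
  have idx : ∀ a : ZMod 5, a ≠ 0 → i + a ≠ i := by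
    intro a ha h
    exact ha ((add_right_inj i).1 (by rw [add_zero]; exact h))
  have hA : ∀ a b : ZMod 5, (b = a + 1 ∨ a = b + 1) → G.Adj (x (i+a)) (x (i+b)) := by
    intro a b h
    refine (hadj _ _).2 ?_
    rcases h with h|h
    · exact Or.inl (by rw [add_assoc, ← h])
    · exact Or.inr (by rw [add_assoc, ← h])
  have A01 : G.Adj (x i) (x (i+1)) := (hadj i (i+1)).2 (Or.inl rfl)
  have A40 : G.Adj (x (i+4)) (x i) := (hadj _ _).2 (Or.inl e41.symm)
  have Ayx : G.Adj (x i) y := ((hychar i).2 rfl).symm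
  have Azx : G.Adj (x i) z0 := ((hz0char i).2 rfl).symm
  -- the new 5-hole x' = (x(i+1), x i, y, s, x(i+2))
  set x' : ZMod 5 → V := fun j =>
    if j = 0 then x (i+1) else if j = 1 then x i else if j = 2 then y
    else if j = 3 then s else x (i+2) with hx'def
  have cf : ∀ a b : ZMod 5, a ≠ b → (a = b) = False := fun a b h => eq_false h
  have hv0 : x' 0 = x (i+1) := by simp [hx'def]
  have hv1 : x' 1 = x i := by simp [hx'def, cf 1 0 (by decide)]
  have hv2 : x' 2 = y := by simp [hx'def, cf 2 0 (by decide), cf 2 1 (by decide)]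
  have hv3 : x' 3 = s := by
    simp [hx'def, cf 3 0 (by decide), cf 3 1 (by decide), cf 3 2 (by decide)]
  have hv4 : x' 4 = x (i+2) := by
    simp [hx'def, cf 4 0 (by decide), cf 4 1 (by decide), cf 4 2 (by decide), cf 4 3 (by decide)]
  -- negative adjacencies for x'
  have Q02 : ¬ G.Adj (x (i+1)) y := fun h => idx 1 (by decide) ((hychar (i+1)).1 h.symm)
  have Q02' : ¬ G.Adj (x (i+1)) z0 := fun h => idx 1 (by decide) ((hz0char (i+1)).1 h.symm)
  have Q03 : ¬ G.Adj (x (i+1)) s := fun h => hs1 h.symm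
  have Q13 : ¬ G.Adj (x i) s := fun h => hs0 h.symm
  have Q14 : ¬ G.Adj (x i) (x (i+2)) := by
    intro h
    rcases (hadj i (i+2)).1 h with h'|h'
    · exact absurd ((add_right_inj i).1 h') (by decide)
    · rw [add_assoc] at h'
      exact idx (2+1) (by decide) h'.symm
  have Q24 : ¬ G.Adj y (x (i+2)) := fun h => idx 2 (by decide) ((hychar (i+2)).1 h)
  have Q24' : ¬ G.Adj z0 (x (i+2)) := fun h => idx 2 (by decide) ((hz0char (i+2)).1 h)
  have Q23' : ¬ G.Adj z0 (x (i+3)) := fun h => idx 3 (by decide) ((hz0char (i+3)).1 h)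
  have Q4' : ¬ G.Adj z0 (x (i+4)) := fun h => idx 4 (by decide) ((hz0char (i+4)).1 h)
  have Qy3 : ¬ G.Adj y (x (i+3)) := fun h => idx 3 (by decide) ((hychar (i+3)).1 h)
  have Qy4 : ¬ G.Adj y (x (i+4)) := fun h => idx 4 (by decide) ((hychar (i+4)).1 h)
  have Qy1 : ¬ G.Adj y (x (i+1)) := fun h => idx 1 (by decide) ((hychar (i+1)).1 h)
  have hcirc' : IsCircInduced G 5 x' := by
    constructor
    · intro a b hab
      rcases zmod5 a with rfl|rfl|rfl|rfl|rfl <;> rcases zmod5 b with rfl|rfl|rfl|rfl|rfl <;>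
        simp only [hv0, hv1, hv2, hv3, hv4] at hab <;>
        first
        | rfl
        | exact absurd hab (hne 1 2 (by decide))
        | exact absurd hab (hne 2 1 (by decide))
        | exact absurd hab (hnei 1 (by decide)).symm
        | exact absurd hab (hnei 1 (by decide))
        | exact absurd hab (hnei 2 (by decide))
        | exact absurd hab (hnei 2 (by decide)).symm
        | exact absurd hab (hrne y hyr _)
        | exact absurd hab (hrne' y hyr _)
        | exact absurd hab (hrne s hsr _)
        | exact absurd hab (hrne' s hsr _)
        | exact absurd hab hys.ne
        | exact absurd hab hys.ne'
    · intro a b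
      rcases zmod5 a with rfl|rfl|rfl|rfl|rfl <;> rcases zmod5 b with rfl|rfl|rfl|rfl|rfl <;>
        simp only [hv0, hv1, hv2, hv3, hv4] <;>
        first
        | exact iff_of_false G.irrefl (by decide)
        | exact iff_of_true A01.symm (by decide)
        | exact iff_of_true A01 (by decide)
        | exact iff_of_true Ayx (by decide)
        | exact iff_of_true Ayx.symm (by decide)
        | exact iff_of_true hys (by decide)
        | exact iff_of_true hys.symm (by decide)
        | exact iff_of_true hs2 (by decide)
        | exact iff_of_true hs2.symm (by decide)
        | exact iff_of_true (hA 2 1 (Or.inr rfl)) (by decide)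
        | exact iff_of_true (hA 1 2 (Or.inl rfl)) (by decide)
        | exact iff_of_false Q02 (by decide)
        | exact iff_of_false (fun h => Q02 h.symm) (by decide)
        | exact iff_of_false Q03 (by decide)
        | exact iff_of_false (fun h => Q03 h.symm) (by decide)
        | exact iff_of_false Q13 (by decide)
        | exact iff_of_false (fun h => Q13 h.symm) (by decide)
        | exact iff_of_false Q14 (by decide)
        | exact iff_of_false (fun h => Q14 h.symm) (by decide)
        | exact iff_of_false Q24 (by decide)
        | exact iff_of_false (fun h => Q24 h.symm) (by decide)
  -- membership 1 ∈ I(x')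
  have hM1 : (1 : ZMod 5) ∈ ICset G 5 x' := by
    refine ⟨z0, ?_, ?_, ?_⟩
    · rintro ⟨j, hj⟩
      rcases zmod5 j with rfl|rfl|rfl|rfl|rfl <;>
        simp only [hv0, hv1, hv2, hv3, hv4] at hj
      · exact hrne z0 hz0r _ hj
      · exact hrne z0 hz0r _ hj
      · exact hyz0.ne hj
      · exact hz0s hj.symm
      · exact hrne z0 hz0r _ hj
    · rw [hv1]; exact Azx
    · rw [show (1:ZMod 5)+1 = 2 by decide, hv2]; exact hyz0
  -- conditional membership 4 ∈ I(x') from i+1 ∈ I(x)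
  have hM4 : (i+1) ∈ ICset G 5 x → (4 : ZMod 5) ∈ ICset G 5 x' := by
    rintro ⟨u, hur, hu1, hu2⟩
    rw [add_assoc] at hu2
    rw [show (1:ZMod 5)+1 = 2 by decide] at hu2
    refine ⟨u, ?_, ?_, ?_⟩
    · rintro ⟨j, hj⟩
      rcases zmod5 j with rfl|rfl|rfl|rfl|rfl <;>
        simp only [hv0, hv1, hv2, hv3, hv4] at hj
      · exact hrne u hur _ hj
      · exact hrne u hur _ hj
      · exact Qy1 (hj ▸ hu1).symm
      · exact hs1 (hj ▸ hu1).symm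
      · exact hrne u hur _ hj
    · rw [hv4]; exact hu2
    · rw [show (4:ZMod 5)+1 = 0 by decide, hv0]; exact hu1
  -- conditional membership 3 ∈ I(x') when s ~ x(i+3)
  have hM3 : G.Adj s (x (i+3)) → (3 : ZMod 5) ∈ ICset G 5 x' := by
    intro hs3
    refine ⟨x (i+3), ?_, ?_, ?_⟩
    · rintro ⟨j, hj⟩
      rcases zmod5 j with rfl|rfl|rfl|rfl|rfl <;>
        simp only [hv0, hv1, hv2, hv3, hv4] at hj
      · exact hne 1 3 (by decide) hj
      · exact hnei 3 (by decide) hj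
      · exact hrne' y hyr _ hj
      · exact hrne' s hsr _ hj
      · exact hne 2 3 (by decide) hj
    · rw [hv3]; exact hs3
    · rw [show (3:ZMod 5)+1 = 4 by decide, hv4]; exact hA 2 3 (Or.inl rfl)
  -- the subset property of I(x)
  have hsub : ∀ j ∈ ICset G 5 x, j = i + 1 ∨ (j = i + 2 ∧ G.Adj s (x (i+3))) := by
    intro j hj
    obtain ⟨w, hwr, hw1, hw2⟩ := hj
    have hj' : j = i + (j - i) := by ring
    rcases zmod5 (j - i) with h|h|h|h|h <;> rw [h] at hj' <;> subst hj'
    · exfalso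
      rw [add_zero] at hw1 hw2
      exact hIi ⟨w, hwr, hw1, hw2⟩
    · exact Or.inl rfl
    · -- j = i+2 : if not s~x(i+3), C8 contradiction
      rw [add_assoc, show (2:ZMod 5)+1 = 3 by decide] at hw2
      by_cases hs3 : G.Adj s (x (i+3))
      · exact Or.inr ⟨rfl, hs3⟩
      · exfalso
        refine hC8 (hasC8 G (x i) z0 y s (x (i+2)) w (x (i+3)) (x (i+4))
          Azx hyz0.symm hys hs2 hw1 hw2.symm (hA 3 4 (Or.inl rfl)) A40
          ?_ ?_ ?_ ?_ ?_ ?_ ?_ ?_ ?_ ?_ ?_ ?_ ?_ ?_ ?_ ?_ ?_ ?_ ?_ ?_)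
        exacts [hrne y hyr i, hrne s hsr i, hnei 2 (by decide), hrne w hwr i,
          hnei 3 (by decide), hz0s, hrne' z0 hz0r _,
          fun hh => Q24' (by rw [hh]; exact hw1.symm), hrne' z0 hz0r _, hrne' z0 hz0r _,
          hrne' y hyr _, fun hh => Q24 (by rw [hh]; exact hw1.symm), hrne' y hyr _,
          hrne' y hyr _, fun hh => hs3 (by rw [hh]; exact hw2.symm), hrne' s hsr _,
          hrne' s hsr _, hne 2 3 (by decide), hne 2 4 (by decide), hrne' w hwr _]
    · -- j = i+3 : C8 contradiction always
      exfalso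
      rw [add_assoc, show (3:ZMod 5)+1 = 4 by decide] at hw2
      refine hC8 (hasC8 G (x i) z0 y s (x (i+2)) (x (i+3)) w (x (i+4))
        Azx hyz0.symm hys hs2 (hA 2 3 (Or.inl rfl)) hw1 hw2.symm A40
        ?_ ?_ ?_ ?_ ?_ ?_ ?_ ?_ ?_ ?_ ?_ ?_ ?_ ?_ ?_ ?_ ?_ ?_ ?_ ?_)
      exacts [hrne y hyr i, hrne s hsr i, hnei 2 (by decide), hnei 3 (by decide),
        hrne w hwr i, hz0s, hrne' z0 hz0r _, hrne' z0 hz0r _,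
        fun hh => Q23' (by rw [hh]; exact hw1.symm), hrne' z0 hz0r _,
        hrne' y hyr _, hrne' y hyr _, fun hh => Qy3 (by rw [hh]; exact hw1.symm),
        hrne' y hyr _, hrne' s hsr _, fun hh => hs4 (by rw [hh]; exact hw2.symm),
        hrne' s hsr _, hrne w hwr _, hne 2 4 (by decide), hne 3 4 (by decide)]
    · exfalso
      rw [add_assoc, show (4:ZMod 5)+1 = 0 by decide, add_zero] at hw2
      exact hIm ⟨w, hwr, by rw [em1]; exact hw1, by rw [sub_add_cancel]; exact hw2⟩
  -- final counting
  have hmx := hmax x' hcirc'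
  by_cases hs3 : G.Adj s (x (i+3))
  · by_cases h1 : (i+1) ∈ ICset G 5 x
    · have hsubset : ({1, 3, 4} : Set (ZMod 5)) ⊆ ICset G 5 x' := by
        intro j hj
        simp only [Set.mem_insert_iff, Set.mem_singleton_iff] at hj
        rcases hj with rfl|rfl|rfl
        exacts [hM1, hM3 hs3, hM4 h1]
      have h3le : 3 ≤ (ICset G 5 x').ncard := by
        have h' := Set.ncard_le_ncard hsubset (Set.toFinite _)
        rwa [Set.ncard_eq_three.mpr ⟨1, 3, 4, by decide, by decide, by decide, rfl⟩] at h'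
      have hup : (ICset G 5 x).ncard ≤ 2 := by
        have hss : ICset G 5 x ⊆ {i+1, i+2} := by
          intro j hj
          rcases hsub j hj with h|h
          · exact Or.inl h
          · exact Or.inr h.1
        exact (Set.ncard_le_ncard hss (Set.toFinite _)).trans
          ((Set.ncard_insert_le _ _).trans (by simp))
      omega
    · have hsubset : ({1, 3} : Set (ZMod 5)) ⊆ ICset G 5 x' := by
        intro j hj
        simp only [Set.mem_insert_iff, Set.mem_singleton_iff] at hj
        rcases hj with rfl|rfl
        exacts [hM1, hM3 hs3]
      have h2le : 2 ≤ (ICset G 5 x').ncard := by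
        have h' := Set.ncard_le_ncard hsubset (Set.toFinite _)
        rwa [Set.ncard_pair (show (1:ZMod 5) ≠ 3 by decide)] at h'
      have hup : (ICset G 5 x).ncard ≤ 1 := by
        have hss : ICset G 5 x ⊆ {i+2} := by
          intro j hj
          rcases hsub j hj with h|h
          · exact absurd (h ▸ hj) h1
          · exact h.1
        exact (Set.ncard_le_ncard hss (Set.toFinite _)).trans (by simp)
      omega
  · by_cases h1 : (i+1) ∈ ICset G 5 x
    · have hsubset : ({1, 4} : Set (ZMod 5)) ⊆ ICset G 5 x' := by
        intro j hj
        simp only [Set.mem_insert_iff, Set.mem_singleton_iff] at hj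
        rcases hj with rfl|rfl
        exacts [hM1, hM4 h1]
      have h2le : 2 ≤ (ICset G 5 x').ncard := by
        have h' := Set.ncard_le_ncard hsubset (Set.toFinite _)
        rwa [Set.ncard_pair (show (1:ZMod 5) ≠ 4 by decide)] at h'
      have hup : (ICset G 5 x).ncard ≤ 1 := by
        have hss : ICset G 5 x ⊆ {i+1} := by
          intro j hj
          rcases hsub j hj with h|h
          · exact h
          · exact absurd h.2 hs3
        exact (Set.ncard_le_ncard hss (Set.toFinite _)).trans (by simp)
      omega
    · have hup : (ICset G 5 x).ncard = 0 := by
        have hss : ICset G 5 x ⊆ (∅ : Set (ZMod 5)) := by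
          intro j hj
          rcases hsub j hj with h|h
          · exact absurd (h ▸ hj) h1
          · exact absurd h.2 hs3
        have := Set.ncard_le_ncard hss (Set.toFinite _)
        simpa using this
      have h1le : 1 ≤ (ICset G 5 x').ncard := by
        rw [Nat.one_le_iff_ne_zero, Ne, Set.ncard_eq_zero (Set.toFinite _)]
        intro h
        rw [h] at hM1
        exact hM1
      omega

lemma handlerB {V : Type*} (G : SimpleGraph V)
    (hC4 : ¬ HasCycleLength G 4) (hC8 : ¬ HasCycleLength G 8)
    (x : ZMod 5 → V) (hcirc : IsCircInduced G 5 x)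
    (hmax : ∀ w : ZMod 5 → V, IsCircInduced G 5 w → (ICset G 5 w).ncard ≤ (ICset G 5 x).ncard)
    (i : ZMod 5) (hIi : i ∉ ICset G 5 x) (hIm : i - 1 ∉ ICset G 5 x)
    (y z0 s : V)
    (hyr : y ∉ Set.range x) (hychar : ∀ j, G.Adj y (x j) ↔ j = i)
    (hz0r : z0 ∉ Set.range x) (hz0char : ∀ j, G.Adj z0 (x j) ↔ j = i)
    (hsr : s ∉ Set.range x)
    (hyz0 : G.Adj y z0) (hys : G.Adj y s) (hz0s : z0 ≠ s)
    (hs3 : G.Adj s (x (i+3))) (hs0 : ¬ G.Adj s (x i)) (hs1 : ¬ G.Adj s (x (i+1)))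
    (hs4 : ¬ G.Adj s (x (i+4))) : False := by
  obtain ⟨hinj, hadj⟩ := hcirc
  have h5zero : (5:ZMod 5) = 0 := by decide
  set r : ZMod 5 → V := fun j => x (2*i - j) with hrdef
  have hrv : ∀ j, r j = x (2*i - j) := fun _ => rfl
  have hrinj : Function.Injective r := by
    intro a b hab
    rw [hrv, hrv] at hab
    have h2 := hinj hab
    linear_combination -h2
  have hradj : ∀ a b, G.Adj (r a) (r b) ↔ (b = a + 1 ∨ a = b + 1) := by
    intro a b
    rw [hrv, hrv, hadj]
    constructor
    · rintro (h|h)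
      · first
        | exact Or.inl (by linear_combination h)
        | exact Or.inl (by linear_combination -h)
        | exact Or.inr (by linear_combination h)
        | exact Or.inr (by linear_combination -h)
      · first
        | exact Or.inl (by linear_combination h)
        | exact Or.inl (by linear_combination -h)
        | exact Or.inr (by linear_combination h)
        | exact Or.inr (by linear_combination -h)
    · rintro (h|h)
      · first
        | exact Or.inl (by linear_combination h)
        | exact Or.inl (by linear_combination -h)
        | exact Or.inr (by linear_combination h)
        | exact Or.inr (by linear_combination -h)
      · first
        | exact Or.inl (by linear_combination h)
        | exact Or.inl (by linear_combination -h)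
        | exact Or.inr (by linear_combination h)
        | exact Or.inr (by linear_combination -h)
  have hrrange : Set.range r = Set.range x := by
    ext v
    constructor
    · rintro ⟨j, rfl⟩
      exact ⟨2*i - j, (hrv j).symm⟩
    · rintro ⟨j, rfl⟩
      exact ⟨2*i - j, by rw [hrv, sub_sub_cancel]⟩
  have hric : ∀ j : ZMod 5, j ∈ ICset G 5 r ↔ (2*i - 1 - j) ∈ ICset G 5 x := by
    intro j
    constructor
    · rintro ⟨v, hv, h1, h2⟩
      rw [hrrange] at hv
      refine ⟨v, hv, ?_, ?_⟩
      · rw [hrv] at h2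
        rw [show (2*i - 1 - j : ZMod 5) = 2*i - (j+1) from by ring]
        exact h2
      · rw [hrv] at h1
        rw [show (2*i - 1 - j + 1 : ZMod 5) = 2*i - j from by ring]
        exact h1
    · rintro ⟨v, hv, h1, h2⟩
      rw [← hrrange] at hv
      refine ⟨v, hv, ?_, ?_⟩
      · rw [hrv, show (2*i - j : ZMod 5) = 2*i - 1 - j + 1 from by ring]
        exact h2
      · rw [hrv, show (2*i - (j+1) : ZMod 5) = 2*i - 1 - j from by ring]
        exact h1
  have hrnc : (ICset G 5 r).ncard = (ICset G 5 x).ncard := by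
    have himg : ICset G 5 r = (fun j => 2*i - 1 - j) '' ICset G 5 x := by
      ext j
      rw [hric]
      constructor
      · intro h
        exact ⟨2*i - 1 - j, h, by ring⟩
      · rintro ⟨k, hk, rfl⟩
        rwa [show (2*i - 1 - (2*i - 1 - k) : ZMod 5) = k from by ring]
    rw [himg, Set.ncard_image_of_injective _ (fun a b hab => by linear_combination -hab)]
  exact handlerA G hC4 hC8 r ⟨hrinj, hradj⟩
    (fun w hw => by rw [hrnc]; exact hmax w hw)
    i
    (by rw [hric, show (2*i - 1 - i : ZMod 5) = i - 1 from by ring]; exact hIm)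
    (by rw [hric, show (2*i - 1 - (i-1) : ZMod 5) = i from by ring]; exact hIi)
    y z0 s
    (by rw [hrrange]; exact hyr)
    (fun j => by rw [hrv, hychar]; constructor <;> intro h <;> linear_combination -h)
    (by rw [hrrange]; exact hz0r)
    (fun j => by rw [hrv, hz0char]; constructor <;> intro h <;> linear_combination -h)
    (by rw [hrrange]; exact hsr)
    hyz0 hys hz0s
    (by rw [hrv, show (2*i - (i+2) : ZMod 5) = i + 3 from by linear_combination -h5zero]; exact hs3)
    (by rw [hrv, show (2*i - i : ZMod 5) = i from by ring]; exact hs0)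
    (by rw [hrv, show (2*i - (i+1) : ZMod 5) = i + 4 from by linear_combination -h5zero]; exact hs4)
    (by rw [hrv, show (2*i - (i+4) : ZMod 5) = i + 1 from by linear_combination -h5zero]; exact hs1)

lemma exists_third {V : Type*} [Fintype V] (G : SimpleGraph V) [DecidableRel G.Adj]
    (v a b : V) (h : 3 ≤ G.degree v) : ∃ w, G.Adj v w ∧ w ≠ a ∧ w ≠ b := by
  classical
  by_contra hc
  push_neg at hc
  have hsub : G.neighborFinset v ⊆ {a, b} := by
    intro w hw
    rw [SimpleGraph.mem_neighborFinset] at hw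
    rcases eq_or_ne w a with rfl | hwa
    · simp
    · simp [hc w hw hwa]
  have := Finset.card_le_card hsub
  have h2 : ({a, b} : Finset V).card ≤ 2 := Finset.card_insert_le a {b} |>.trans (by simp)
  rw [← SimpleGraph.card_neighborFinset_eq_degree] at h
  omega

lemma exists_two {V : Type*} [Fintype V] (G : SimpleGraph V) [DecidableRel G.Adj]
    (v a : V) (h : 3 ≤ G.degree v) :
    ∃ w1 w2, G.Adj v w1 ∧ G.Adj v w2 ∧ w1 ≠ w2 ∧ w1 ≠ a ∧ w2 ≠ a := by
  classical
  have hcard : 2 ≤ ((G.neighborFinset v).erase a).card := by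
    have h1 := Finset.pred_card_le_card_erase (a := a) (s := G.neighborFinset v)
    rw [← SimpleGraph.card_neighborFinset_eq_degree] at h
    omega
  have hcard' : 1 < ((G.neighborFinset v).erase a).card := hcard
  rw [Finset.one_lt_card] at hcard'
  obtain ⟨w1, hw1, w2, hw2, hne⟩ := hcard'
  rw [Finset.mem_erase, SimpleGraph.mem_neighborFinset] at hw1 hw2
  exact ⟨w1, w2, hw1.2, hw2.2, hne, hw1.1, hw2.1⟩

theorem stmt_13 {V : Type*} [Fintype V] (G : SimpleGraph V) [DecidableRel G.Adj]
    (hdeg : ∀ v : V, 3 ≤ G.degree v) (hP10 : P10Free G)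
    (hC4 : ¬ HasCycleLength G 4) (hC8 : ¬ HasCycleLength G 8)
    (x : ZMod 5 → V) (hgood : IsGoodHole G 5 x) :
    ∀ i : ZMod 5, i ∉ ICset G 5 x → i - 1 ∉ ICset G 5 x →
      ∃ y z u : V,
        y ∉ Set.range x ∧ z ∉ Set.range x ∧ u ∉ Set.range x ∧
        y ≠ z ∧ y ≠ u ∧ z ≠ u ∧
        G.Adj (x i) y ∧ G.Adj y z ∧ G.Adj z u ∧ ¬ G.Adj y u ∧
        (∀ j : ZMod 5, G.Adj y (x j) ↔ j = i) ∧
        (∀ j : ZMod 5, ¬ G.Adj z (x j)) ∧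
        (∀ j : ZMod 5, ¬ G.Adj u (x j)) := by
  intro i hIi hIm
  obtain ⟨-, hcirc, -, hmax⟩ := hgood
  obtain ⟨hinj, hadj⟩ := hcirc
  have h5zero : (5:ZMod 5) = 0 := by decide
  have e41 : i + 4 + 1 = i := by rw [add_assoc, show (4:ZMod 5)+1 = 0 by decide, add_zero]
  have em1 : i - 1 = i + 4 := by linear_combination -h5zero
  have hne : ∀ a b : ZMod 5, a ≠ b → x (i+a) ≠ x (i+b) :=
    fun a b hab h => hab (add_left_cancel (hinj h))
  have hnei : ∀ b : ZMod 5, b ≠ 0 → x i ≠ x (i+b) := by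
    intro b hb h
    have h2 : i + 0 = i + b := by rw [add_zero]; exact hinj h
    exact hb ((add_right_inj i).1 h2).symm
  have hrne : ∀ v : V, v ∉ Set.range x → ∀ j : ZMod 5, x j ≠ v := fun v hv j h => hv ⟨j, h⟩
  have hrne' : ∀ v : V, v ∉ Set.range x → ∀ j : ZMod 5, v ≠ x j := fun v hv j h => hv ⟨j, h.symm⟩
  have hA : ∀ a b : ZMod 5, (b = a + 1 ∨ a = b + 1) → G.Adj (x (i+a)) (x (i+b)) := by
    intro a b h
    refine (hadj _ _).2 ?_
    rcases h with h|h
    · exact Or.inl (by rw [add_assoc, ← h])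
    · exact Or.inr (by rw [add_assoc, ← h])
  have A01 : G.Adj (x i) (x (i+1)) := (hadj i (i+1)).2 (Or.inl rfl)
  have A40 : G.Adj (x (i+4)) (x i) := (hadj _ _).2 (Or.inl e41.symm)
  have A10 : G.Adj (x (i+1)) (x i) := A01.symm
  have A04 : G.Adj (x i) (x (i+4)) := A40.symm
  -- select y : a neighbor of x i outside the cycle
  obtain ⟨y, hxy, hy1, hy4⟩ := exists_third G (x i) (x (i+1)) (x (i+4)) (hdeg _)
  have hyr : y ∉ Set.range x := by
    rintro ⟨j, rfl⟩
    rcases (hadj i j).1 hxy with h|h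
    · exact hy1 (congrArg x h)
    · refine hy4 (congrArg x ?_)
      first
      | linear_combination h + h5zero
      | linear_combination h - h5zero
      | linear_combination -h + h5zero
      | linear_combination -h - h5zero
  -- every outside neighbor of x i is adjacent on C only to x i
  have hchar0 : ∀ v, v ∉ Set.range x → G.Adj (x i) v → ∀ j, G.Adj v (x j) ↔ j = i := by
    intro v hv hiv j
    constructor
    · intro h
      have hj' : j = i + (j - i) := by ring
      rcases zmod5 (j - i) with hh|hh|hh|hh|hh <;> rw [hh] at hj' <;> subst hj'
      · exact add_zero i
      · exact absurd (⟨v, hv, hiv, h.symm⟩ : i ∈ ICset G 5 x) hIi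
      · exact absurd (hasC4 G (x i) v (x (i+2)) (x (i+1)) hiv h
          (hA 2 1 (Or.inr rfl)) A10 (hnei 2 (by decide)) (hrne' v hv _)) hC4
      · exact absurd (hasC4 G (x i) v (x (i+3)) (x (i+4)) hiv h
          (hA 3 4 (Or.inl rfl)) A40 (hnei 3 (by decide)) (hrne' v hv _)) hC4
      · exact absurd (⟨v, hv, by rw [em1]; exact h.symm,
          by rw [sub_add_cancel]; exact hiv⟩ : i - 1 ∈ ICset G 5 x) hIm
    · rintro rfl
      exact hiv.symm
  have hychar := hchar0 y hyr hxy
  by_cases hclean : ∃ z, G.Adj y z ∧ z ≠ x i ∧ ∀ j, ¬ G.Adj z (x j)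
  · -- Case (a): y has a neighbor z with no neighbor on C
    obtain ⟨z, hyz, hzx, hzchar⟩ := hclean
    have hzr : z ∉ Set.range x := by
      rintro ⟨j, rfl⟩
      exact hzx (congrArg x ((hychar j).1 hyz))
    obtain ⟨u1, u2, hzu1, hzu2, hu12, hu1y, hu2y⟩ := exists_two G z y (hdeg z)
    have hufacts : ∀ u, G.Adj z u → u ≠ y →
        u ∉ Set.range x ∧ ¬ G.Adj u (x i) ∧ ¬ G.Adj u (x (i+1)) ∧ ¬ G.Adj u (x (i+4)) := by
      intro u hzu huy
      have hur : u ∉ Set.range x := by rintro ⟨j, rfl⟩; exact hzchar j hzu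
      refine ⟨hur, ?_, ?_, ?_⟩
      · intro h
        exact hC4 (hasC4 G (x i) y z u hxy hyz hzu h (Ne.symm hzx) (Ne.symm huy))
      · intro h
        refine hC8 (hasC8 G (x i) y z u (x (i+1)) (x (i+2)) (x (i+3)) (x (i+4))
          hxy hyz hzu h (hA 1 2 (Or.inl rfl)) (hA 2 3 (Or.inl rfl)) (hA 3 4 (Or.inl rfl)) A40
          ?_ ?_ ?_ ?_ ?_ ?_ ?_ ?_ ?_ ?_ ?_ ?_ ?_ ?_ ?_ ?_ ?_ ?_ ?_ ?_)
        exacts [Ne.symm hzx, hrne u hur i, hnei 1 (by decide), hnei 2 (by decide),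
          hnei 3 (by decide), Ne.symm huy, hrne' y hyr _, hrne' y hyr _, hrne' y hyr _,
          hrne' y hyr _, hrne' z hzr _, hrne' z hzr _, hrne' z hzr _, hrne' z hzr _,
          hrne' u hur _, hrne' u hur _, hrne' u hur _,
          hne 1 3 (by decide), hne 1 4 (by decide), hne 2 4 (by decide)]
      · intro h
        refine hC8 (hasC8 G (x i) y z u (x (i+4)) (x (i+3)) (x (i+2)) (x (i+1))
          hxy hyz hzu h (hA 4 3 (Or.inr rfl)) (hA 3 2 (Or.inr rfl)) (hA 2 1 (Or.inr rfl)) A10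
          ?_ ?_ ?_ ?_ ?_ ?_ ?_ ?_ ?_ ?_ ?_ ?_ ?_ ?_ ?_ ?_ ?_ ?_ ?_ ?_)
        exacts [Ne.symm hzx, hrne u hur i, hnei 4 (by decide), hnei 3 (by decide),
          hnei 2 (by decide), Ne.symm huy, hrne' y hyr _, hrne' y hyr _, hrne' y hyr _,
          hrne' y hyr _, hrne' z hzr _, hrne' z hzr _, hrne' z hzr _, hrne' z hzr _,
          hrne' u hur _, hrne' u hur _, hrne' u hur _,
          hne 4 2 (by decide), hne 4 1 (by decide), hne 3 1 (by decide)]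
    by_cases hg1 : ¬ G.Adj y u1 ∧ ∀ j, ¬ G.Adj u1 (x j)
    · exact ⟨y, z, u1, hyr, hzr, (hufacts u1 hzu1 hu1y).1, hyz.ne, Ne.symm hu1y, hzu1.ne,
        hxy, hyz, hzu1, hg1.1, hychar, hzchar, hg1.2⟩
    · by_cases hg2 : ¬ G.Adj y u2 ∧ ∀ j, ¬ G.Adj u2 (x j)
      · exact ⟨y, z, u2, hyr, hzr, (hufacts u2 hzu2 hu2y).1, hyz.ne, Ne.symm hu2y, hzu2.ne,
          hxy, hyz, hzu2, hg2.1, hychar, hzchar, hg2.2⟩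
      · exfalso
        have hbad : ∀ u, G.Adj z u → u ≠ y → ¬(¬ G.Adj y u ∧ ∀ j, ¬ G.Adj u (x j)) →
            G.Adj y u ∨ G.Adj u (x (i+2)) ∨ G.Adj u (x (i+3)) := by
          intro u hzu huy hnot
          obtain ⟨hur, q0, q1, q4⟩ := hufacts u hzu huy
          by_cases hyu : G.Adj y u
          · exact Or.inl hyu
          · right
            push_neg at hnot
            obtain ⟨j, hj⟩ := hnot hyu
            have hj' : j = i + (j - i) := by ring
            rcases zmod5 (j - i) with hh|hh|hh|hh|hh <;> rw [hh] at hj' <;> subst hj'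
            · rw [add_zero] at hj; exact absurd hj q0
            · exact absurd hj q1
            · exact Or.inl hj
            · exact Or.inr hj
            · exact absurd hj q4
        have hb1 := hbad u1 hzu1 hu1y hg1
        have hb2 := hbad u2 hzu2 hu2y hg2
        obtain ⟨hu1r, -, -, -⟩ := hufacts u1 hzu1 hu1y
        obtain ⟨hu2r, -, -, -⟩ := hufacts u2 hzu2 hu2y
        rcases hb1 with b1|b1|b1
        · rcases hb2 with b2|b2|b2
          · exact hC4 (hasC4 G y u1 z u2 b1 hzu1.symm hzu2 b2.symm hyz.ne hu12)
          · refine hC8 (hasC8 G y u1 z u2 (x (i+2)) (x (i+3)) (x (i+4)) (x i)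
              b1 hzu1.symm hzu2 b2 (hA 2 3 (Or.inl rfl)) (hA 3 4 (Or.inl rfl)) A40 hxy
              ?_ ?_ ?_ ?_ ?_ ?_ ?_ ?_ ?_ ?_ ?_ ?_ ?_ ?_ ?_ ?_ ?_ ?_ ?_ ?_)
            exacts [hyz.ne, Ne.symm hu2y, hrne' y hyr _, hrne' y hyr _, hrne' y hyr _,
              hu12, hrne' u1 hu1r _, hrne' u1 hu1r _, hrne' u1 hu1r _, hrne' u1 hu1r _,
              hrne' z hzr _, hrne' z hzr _, hrne' z hzr _, hrne' z hzr _,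
              hrne' u2 hu2r _, hrne' u2 hu2r _, hrne' u2 hu2r _,
              hne 2 4 (by decide), (hnei 2 (by decide)).symm, (hnei 3 (by decide)).symm]
          · refine hC8 (hasC8 G y u1 z u2 (x (i+3)) (x (i+2)) (x (i+1)) (x i)
              b1 hzu1.symm hzu2 b2 (hA 3 2 (Or.inr rfl)) (hA 2 1 (Or.inr rfl)) A10 hxy
              ?_ ?_ ?_ ?_ ?_ ?_ ?_ ?_ ?_ ?_ ?_ ?_ ?_ ?_ ?_ ?_ ?_ ?_ ?_ ?_)
            exacts [hyz.ne, Ne.symm hu2y, hrne' y hyr _, hrne' y hyr _, hrne' y hyr _,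
              hu12, hrne' u1 hu1r _, hrne' u1 hu1r _, hrne' u1 hu1r _, hrne' u1 hu1r _,
              hrne' z hzr _, hrne' z hzr _, hrne' z hzr _, hrne' z hzr _,
              hrne' u2 hu2r _, hrne' u2 hu2r _, hrne' u2 hu2r _,
              hne 3 1 (by decide), (hnei 3 (by decide)).symm, (hnei 2 (by decide)).symm]
        · rcases hb2 with b2|b2|b2
          · refine hC8 (hasC8 G y u2 z u1 (x (i+2)) (x (i+3)) (x (i+4)) (x i)
              b2 hzu2.symm hzu1 b1 (hA 2 3 (Or.inl rfl)) (hA 3 4 (Or.inl rfl)) A40 hxy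
              ?_ ?_ ?_ ?_ ?_ ?_ ?_ ?_ ?_ ?_ ?_ ?_ ?_ ?_ ?_ ?_ ?_ ?_ ?_ ?_)
            exacts [hyz.ne, Ne.symm hu1y, hrne' y hyr _, hrne' y hyr _, hrne' y hyr _,
              Ne.symm hu12, hrne' u2 hu2r _, hrne' u2 hu2r _, hrne' u2 hu2r _, hrne' u2 hu2r _,
              hrne' z hzr _, hrne' z hzr _, hrne' z hzr _, hrne' z hzr _,
              hrne' u1 hu1r _, hrne' u1 hu1r _, hrne' u1 hu1r _,
              hne 2 4 (by decide), (hnei 2 (by decide)).symm, (hnei 3 (by decide)).symm]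
          · exact hC4 (hasC4 G (x (i+2)) u1 z u2 b1.symm hzu1.symm hzu2 b2
              (hrne z hzr _) hu12)
          · refine hC8 (hasC8 G u1 (x (i+2)) (x (i+1)) (x i) (x (i+4)) (x (i+3)) u2 z
              b1 (hA 2 1 (Or.inr rfl)) A10 A04 (hA 4 3 (Or.inr rfl)) b2.symm hzu2.symm hzu1
              ?_ ?_ ?_ ?_ ?_ ?_ ?_ ?_ ?_ ?_ ?_ ?_ ?_ ?_ ?_ ?_ ?_ ?_ ?_ ?_)
            exacts [hrne' u1 hu1r _, hrne' u1 hu1r _, hrne' u1 hu1r _, hrne' u1 hu1r _, hu12,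
              (hnei 2 (by decide)).symm, hne 2 4 (by decide), hne 2 3 (by decide),
              hrne u2 hu2r _, hrne z hzr _,
              hne 1 4 (by decide), hne 1 3 (by decide), hrne u2 hu2r _, hrne z hzr _,
              hnei 3 (by decide), hrne u2 hu2r _, hrne z hzr _,
              hrne u2 hu2r _, hrne z hzr _, hrne z hzr _]
        · rcases hb2 with b2|b2|b2
          · refine hC8 (hasC8 G y u2 z u1 (x (i+3)) (x (i+2)) (x (i+1)) (x i)
              b2 hzu2.symm hzu1 b1 (hA 3 2 (Or.inr rfl)) (hA 2 1 (Or.inr rfl)) A10 hxy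
              ?_ ?_ ?_ ?_ ?_ ?_ ?_ ?_ ?_ ?_ ?_ ?_ ?_ ?_ ?_ ?_ ?_ ?_ ?_ ?_)
            exacts [hyz.ne, Ne.symm hu1y, hrne' y hyr _, hrne' y hyr _, hrne' y hyr _,
              Ne.symm hu12, hrne' u2 hu2r _, hrne' u2 hu2r _, hrne' u2 hu2r _, hrne' u2 hu2r _,
              hrne' z hzr _, hrne' z hzr _, hrne' z hzr _, hrne' z hzr _,
              hrne' u1 hu1r _, hrne' u1 hu1r _, hrne' u1 hu1r _,
              hne 3 1 (by decide), (hnei 3 (by decide)).symm, (hnei 2 (by decide)).symm]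
          · refine hC8 (hasC8 G u1 (x (i+3)) (x (i+4)) (x i) (x (i+1)) (x (i+2)) u2 z
              b1 (hA 3 4 (Or.inl rfl)) A40 A01 (hA 1 2 (Or.inl rfl)) b2.symm hzu2.symm hzu1
              ?_ ?_ ?_ ?_ ?_ ?_ ?_ ?_ ?_ ?_ ?_ ?_ ?_ ?_ ?_ ?_ ?_ ?_ ?_ ?_)
            exacts [hrne' u1 hu1r _, hrne' u1 hu1r _, hrne' u1 hu1r _, hrne' u1 hu1r _, hu12,
              (hnei 3 (by decide)).symm, hne 3 1 (by decide), hne 3 2 (by decide),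
              hrne u2 hu2r _, hrne z hzr _,
              hne 4 1 (by decide), hne 4 2 (by decide), hrne u2 hu2r _, hrne z hzr _,
              hnei 2 (by decide), hrne u2 hu2r _, hrne z hzr _,
              hrne u2 hu2r _, hrne z hzr _, hrne z hzr _]
          · exact hC4 (hasC4 G (x (i+3)) u1 z u2 b1.symm hzu1.symm hzu2 b2
              (hrne z hzr _) hu12)
  · -- Case (b): every neighbor of y other than x i has a neighbor on C
    exfalso
    push_neg at hclean
    obtain ⟨t1, t2, hyt1, hyt2, ht12, ht1x, ht2x⟩ := exists_two G y (x i) (hdeg y)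
    have htf : ∀ t, G.Adj y t → t ≠ x i →
        t ∉ Set.range x ∧ ¬ G.Adj t (x (i+1)) ∧ ¬ G.Adj t (x (i+4)) ∧
        (G.Adj t (x i) ∨ G.Adj t (x (i+2)) ∨ G.Adj t (x (i+3))) := by
      intro t hyt htx
      have htr : t ∉ Set.range x := by
        rintro ⟨j, rfl⟩
        exact htx (congrArg x ((hychar j).1 hyt))
      have q1 : ¬ G.Adj t (x (i+1)) := by
        intro h
        exact hC4 (hasC4 G t (x (i+1)) (x i) y h A10 hxy hyt htx (hrne y hyr _))
      have q4 : ¬ G.Adj t (x (i+4)) := by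
        intro h
        exact hC4 (hasC4 G t (x (i+4)) (x i) y h A40 hxy hyt htx (hrne y hyr _))
      refine ⟨htr, q1, q4, ?_⟩
      obtain ⟨j, hj⟩ := hclean t hyt htx
      have hj' : j = i + (j - i) := by ring
      rcases zmod5 (j - i) with hh|hh|hh|hh|hh <;> rw [hh] at hj' <;> subst hj'
      · rw [add_zero] at hj; exact Or.inl hj
      · exact absurd hj q1
      · exact Or.inr (Or.inl hj)
      · exact Or.inr (Or.inr hj)
      · exact absurd hj q4
    obtain ⟨ht1r, q11, q14, hd1⟩ := htf t1 hyt1 ht1x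
    obtain ⟨ht2r, q21, q24, hd2⟩ := htf t2 hyt2 ht2x
    by_cases h10 : G.Adj t1 (x i) <;> by_cases h20 : G.Adj t2 (x i)
    · exact hC4 (hasC4 G (x i) t1 y t2 h10.symm hyt1.symm hyt2 h20 (hrne y hyr i) ht12)
    · have hz0char := hchar0 t1 ht1r h10.symm
      rcases hd2 with h|h|h
      · exact absurd h h20
      · exact handlerA G hC4 hC8 x ⟨hinj, hadj⟩ hmax i hIi hIm y t1 t2 hyr hychar
          ht1r hz0char ht2r hyt1 hyt2 ht12 h h20 q21 q24
      · exact handlerB G hC4 hC8 x ⟨hinj, hadj⟩ hmax i hIi hIm y t1 t2 hyr hychar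
          ht1r hz0char ht2r hyt1 hyt2 ht12 h h20 q21 q24
    · have hz0char := hchar0 t2 ht2r h20.symm
      rcases hd1 with h|h|h
      · exact absurd h h10
      · exact handlerA G hC4 hC8 x ⟨hinj, hadj⟩ hmax i hIi hIm y t2 t1 hyr hychar
          ht2r hz0char ht1r hyt2 hyt1 (Ne.symm ht12) h h10 q11 q14
      · exact handlerB G hC4 hC8 x ⟨hinj, hadj⟩ hmax i hIi hIm y t2 t1 hyr hychar
          ht2r hz0char ht1r hyt2 hyt1 (Ne.symm ht12) h h10 q11 q14
    · rcases hd1 with h1'|h1'|h1'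
      · exact absurd h1' h10
      · rcases hd2 with h2'|h2'|h2'
        · exact absurd h2' h20
        · exact hC4 (hasC4 G (x (i+2)) t1 y t2 h1'.symm hyt1.symm hyt2 h2'
            (hrne y hyr _) ht12)
        · refine hC8 (hasC8 G y t1 (x (i+2)) (x (i+1)) (x i) (x (i+4)) (x (i+3)) t2
            hyt1 h1' (hA 2 1 (Or.inr rfl)) A10 A04 (hA 4 3 (Or.inr rfl)) h2'.symm hyt2.symm
            ?_ ?_ ?_ ?_ ?_ ?_ ?_ ?_ ?_ ?_ ?_ ?_ ?_ ?_ ?_ ?_ ?_ ?_ ?_ ?_)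
          exacts [hrne' y hyr _, hrne' y hyr _, hrne' y hyr _, hrne' y hyr _, hrne' y hyr _,
            hrne' t1 ht1r _, ht1x, hrne' t1 ht1r _, hrne' t1 ht1r _, ht12,
            (hnei 2 (by decide)).symm, hne 2 4 (by decide), hne 2 3 (by decide),
            hrne t2 ht2r _,
            hne 1 4 (by decide), hne 1 3 (by decide), hrne t2 ht2r _,
            hnei 3 (by decide), hrne t2 ht2r _, hrne t2 ht2r _]
      · rcases hd2 with h2'|h2'|h2'
        · exact absurd h2' h20
        · refine hC8 (hasC8 G y t2 (x (i+2)) (x (i+1)) (x i) (x (i+4)) (x (i+3)) t1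
            hyt2 h2' (hA 2 1 (Or.inr rfl)) A10 A04 (hA 4 3 (Or.inr rfl)) h1'.symm hyt1.symm
            ?_ ?_ ?_ ?_ ?_ ?_ ?_ ?_ ?_ ?_ ?_ ?_ ?_ ?_ ?_ ?_ ?_ ?_ ?_ ?_)
          exacts [hrne' y hyr _, hrne' y hyr _, hrne' y hyr _, hrne' y hyr _, hrne' y hyr _,
            hrne' t2 ht2r _, ht2x, hrne' t2 ht2r _, hrne' t2 ht2r _, Ne.symm ht12,
            (hnei 2 (by decide)).symm, hne 2 4 (by decide), hne 2 3 (by decide),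
            hrne t1 ht1r _,
            hne 1 4 (by decide), hne 1 3 (by decide), hrne t1 ht1r _,
            hnei 3 (by decide), hrne t1 ht1r _, hrne t1 ht1r _]
        · exact hC4 (hasC4 G (x (i+3)) t1 y t2 h1'.symm hyt1.symm hyt2 h2'
            (hrne y hyr _) ht12)
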